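/- Let n be a positive integer, let H be an n×n Hermitian complex matrix whose eigenvalues λ₁, …, λ_n are pairwise distinct, with orthonormal eigenbasis (ψ_j), let R be an n×n complex matrix, let ψ = Σ_j a_j ψ_j ∈ ℂⁿ, and let m ≥ 0 be a natural number. Then, as T → ∞, (1/T)·∫₀ᵀ ⟨ψ, exp(iHt)·Hᵐ·R·exp(−iHt)·ψ⟩ dt converges to Σ_j |a_j|²·λ_jᵐ·⟨ψ_j, R ψ_j⟩. -/

import Mathlib

open Matrix Finset Filter NormedSpace
set_option maxHeartbeats 2000000

lemma mulVec_pow_eig {n : ℕ} (M : Matrix (Fin n) (Fin n) ℂ) (u : Fin n → ℂ) (μ : ℂ)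
    (h : M.mulVec u = μ • u) (k : ℕ) : (M ^ k).mulVec u = (μ ^ k) • u := by
  induction k with
  | zero => simp
  | succ k ih =>
    rw [pow_succ', ← Matrix.mulVec_mulVec, ih, Matrix.mulVec_smul, h, smul_smul]; ring_nf

lemma mulVec_exp_eig {n : ℕ} (M : Matrix (Fin n) (Fin n) ℂ) (u : Fin n → ℂ) (μ : ℂ)
    (h : M.mulVec u = μ • u) : (exp M).mulVec u = Complex.exp μ • u := by
  letI : SeminormedRing (Matrix (Fin n) (Fin n) ℂ) := Matrix.linftyOpSemiNormedRing
  letI : NormedRing (Matrix (Fin n) (Fin n) ℂ) := Matrix.linftyOpNormedRing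
  letI : NormedAlgebra ℂ (Matrix (Fin n) (Fin n) ℂ) := Matrix.linftyOpNormedAlgebra
  let f : Matrix (Fin n) (Fin n) ℂ →ₗ[ℂ] (Fin n → ℂ) :=
    { toFun := fun A => A.mulVec u
      map_add' := fun A B => Matrix.add_mulVec A B u
      map_smul' := fun c A => Matrix.smul_mulVec c A u }
  let F := LinearMap.toContinuousLinearMap f
  have hFapp : ∀ A : Matrix (Fin n) (Fin n) ℂ, F A = A.mulVec u := fun A => rfl
  have hF : (exp M).mulVec u = F (exp M) := rfl
  rw [hF, exp_eq_tsum (𝕂 := ℂ), F.map_tsum (expSeries_summable' (𝕂 := ℂ) M)]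
  have key : ∀ k : ℕ, F (((k.factorial : ℕ) : ℂ)⁻¹ • M ^ k)
      = ((((k.factorial : ℕ) : ℂ))⁻¹ • μ ^ k) • u := by
    intro k
    rw [hFapp, Matrix.smul_mulVec, mulVec_pow_eig M u μ h, smul_smul, smul_eq_mul]
  rw [tsum_congr key, (expSeries_summable' (𝕂 := ℂ) μ).tsum_smul_const]
  congr 1
  rw [Complex.exp_eq_exp_ℂ, exp_eq_tsum (𝕂 := ℂ)]

lemma dot_adjoint {n : ℕ} (M : Matrix (Fin n) (Fin n) ℂ) (u w : Fin n → ℂ) :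
    star u ⬝ᵥ M.mulVec w = star (Mᴴ.mulVec u) ⬝ᵥ w := by
  rw [Matrix.dotProduct_mulVec, Matrix.star_mulVec, Matrix.conjTranspose_conjTranspose]

lemma tendsto_avg_exp (ω : ℝ) :
    Tendsto (fun T : ℝ => (1 / (T : ℂ)) * ∫ t in (0:ℝ)..T, Complex.exp (Complex.I * ω * t))
      atTop (nhds (if ω = 0 then 1 else 0)) := by
  by_cases hω : ω = 0
  · simp only [hω, if_pos rfl, Complex.ofReal_zero, mul_zero, zero_mul, Complex.exp_zero]
    have h : (fun _ : ℝ => (1:ℂ)) =ᶠ[atTop]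
        (fun T : ℝ => (1 / (T : ℂ)) * ∫ _ in (0:ℝ)..T, (1:ℂ)) := by
      filter_upwards [eventually_ge_atTop (1:ℝ)] with T hT
      have hT0 : (T : ℂ) ≠ 0 := by
        exact_mod_cast ne_of_gt (lt_of_lt_of_le one_pos hT)
      simp [hT0]
    exact Tendsto.congr' h tendsto_const_nhds
  · have hc : (Complex.I * ω) ≠ 0 := by
      simp [Complex.ext_iff, hω, Complex.I_ne_zero]
    rw [if_neg hω]
    apply squeeze_zero_norm' (a := fun T : ℝ => (2 / ‖Complex.I * (ω:ℂ)‖) * T⁻¹)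
    · filter_upwards [eventually_ge_atTop (1:ℝ)] with T hT
      have hT0 : (0:ℝ) < T := lt_of_lt_of_le one_pos hT
      rw [integral_exp_mul_complex hc]
      have h1 : ‖Complex.exp (Complex.I * ω * T) - Complex.exp (Complex.I * ω * ((0:ℝ):ℂ))‖ ≤ 2 := by
        have he : ‖Complex.exp (Complex.I * ω * T)‖ = 1 := by
          rw [Complex.norm_exp]
          simp [Complex.mul_re]
        calc ‖Complex.exp (Complex.I * ω * T) - Complex.exp (Complex.I * ω * ((0:ℝ):ℂ))‖
            ≤ ‖Complex.exp (Complex.I * ω * T)‖ + ‖Complex.exp (Complex.I * ω * ((0:ℝ):ℂ))‖ :=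
              norm_sub_le _ _
          _ ≤ 2 := by rw [he]; simp; norm_num
      rw [norm_mul, norm_div, norm_div]
      have h2 : ‖(1 : ℂ)‖ / ‖(T : ℂ)‖ = T⁻¹ := by
        simp [Complex.norm_real, abs_of_pos hT0]
      rw [h2, mul_comm]
      apply mul_le_mul_of_nonneg_right _ (by positivity)
      gcongr
    · have : Tendsto (fun T : ℝ => T⁻¹) atTop (nhds 0) := tendsto_inv_atTop_zero
      simpa using this.const_mul (2 / ‖Complex.I * (ω:ℂ)‖)

lemma sum_dotProduct' {n : ℕ} (f : Fin n → (Fin n → ℂ)) (w : Fin n → ℂ) :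
    (∑ j, f j) ⬝ᵥ w = ∑ j, f j ⬝ᵥ w := by
  simp only [dotProduct, Finset.sum_apply, Finset.sum_mul]
  exact Finset.sum_comm

lemma dotProduct_sum' {n : ℕ} (u : Fin n → ℂ) (f : Fin n → (Fin n → ℂ)) :
    u ⬝ᵥ (∑ j, f j) = ∑ j, u ⬝ᵥ f j := by
  simp only [dotProduct, Finset.sum_apply, Finset.mul_sum]
  exact Finset.sum_comm

/-- Long-time average of the Heisenberg-evolved observable `Hᵐ R` in the state `ψ`:
`(1/T)∫₀ᵀ ⟨ψ, exp(iHt) Hᵐ R exp(−iHt) ψ⟩ dt → Σ_j |a_j|² λ_jᵐ ⟨ψ_j, R ψ_j⟩`. -/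
theorem time_average_observable (n : ℕ) (hn : 0 < n)
    (H : Matrix (Fin n) (Fin n) ℂ) (hH : H.IsHermitian)
    (lam : Fin n → ℝ) (hdist : Function.Injective lam)
    (ψ : Fin n → (Fin n → ℂ))
    (hon : ∀ j k, star (ψ j) ⬝ᵥ ψ k = if j = k then 1 else 0)
    (heig : ∀ j, H.mulVec (ψ j) = (Complex.ofReal (lam j)) • ψ j)
    (R : Matrix (Fin n) (Fin n) ℂ)
    (a : Fin n → ℂ) (v : Fin n → ℂ) (hv : v = ∑ j, a j • ψ j)
    (m : ℕ) :
    Tendsto (fun T : ℝ => (1 / (T : ℂ)) *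
        ∫ t in (0:ℝ)..T, star v ⬝ᵥ
          (exp ((Complex.I * t) • H) * H ^ m * R *
            exp ((-(Complex.I * t)) • H)).mulVec v)
      atTop
      (nhds (∑ j, Complex.ofReal (‖a j‖ ^ 2) * Complex.ofReal (lam j) ^ m *
        (star (ψ j) ⬝ᵥ R.mulVec (ψ j)))) := by
  set B : Fin n → Fin n → ℂ := fun j k => star (ψ j) ⬝ᵥ R.mulVec (ψ k) with hB
  set C : Fin n → Fin n → ℂ :=
    fun j k => (starRingEnd ℂ) (a j) * a k * ((lam j : ℂ)) ^ m * B j k with hC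
  -- Step A: pointwise expansion of the integrand
  have stepA : ∀ t : ℝ, star v ⬝ᵥ
      (exp ((Complex.I * t) • H) * H ^ m * R *
        exp ((-(Complex.I * t)) • H)).mulVec v
      = ∑ j, ∑ k, C j k * Complex.exp (Complex.I * ((lam j - lam k : ℝ) : ℂ) * t) := by
    intro t
    set c : Fin n → ℂ := fun j => a j * Complex.exp (-(Complex.I * t) * lam j) with hc
    -- eigen action of exp(-(it)H)
    have heigexp : ∀ j, (exp ((-(Complex.I * t)) • H)).mulVec (ψ j)
        = Complex.exp (-(Complex.I * t) * lam j) • ψ j := by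
      intro j
      apply mulVec_exp_eig
      rw [Matrix.smul_mulVec, heig, smul_smul]
    have hw : (exp ((-(Complex.I * t)) • H)).mulVec v = ∑ k, c k • ψ k := by
      rw [hv, ← Matrix.mulVecLin_apply, map_sum]
      refine Finset.sum_congr rfl fun k _ => ?_
      rw [_root_.map_smul, Matrix.mulVecLin_apply, heigexp, smul_smul, hc]
    -- adjoint of exp((it)H)
    have hadj : (exp ((Complex.I * t) • H))ᴴ = exp ((-(Complex.I * t)) • H) := by
      rw [← Matrix.exp_conjTranspose]
      congr 1
      rw [Matrix.conjTranspose_smul, hH.eq]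
      congr 1
      simp only [Complex.star_def, _root_.map_mul, map_neg, Complex.conj_I, Complex.conj_ofReal]
      ring
    -- (H^m)ᴴ = H^m
    have hpowherm : (H ^ m)ᴴ = H ^ m := by
      rw [Matrix.conjTranspose_pow, hH.eq]
    -- H^m applied to w
    have hHmw : (H ^ m).mulVec (∑ k, c k • ψ k) = ∑ j, (c j * (lam j : ℂ) ^ m) • ψ j := by
      rw [← Matrix.mulVecLin_apply, map_sum]
      refine Finset.sum_congr rfl fun j _ => ?_
      rw [_root_.map_smul, Matrix.mulVecLin_apply, mulVec_pow_eig H (ψ j) _ (heig j), smul_smul]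
    -- R applied to w
    have hRw : R.mulVec (∑ k, c k • ψ k) = ∑ k, c k • R.mulVec (ψ k) := by
      rw [← Matrix.mulVecLin_apply, map_sum]
      exact Finset.sum_congr rfl fun k _ => by rw [_root_.map_smul, Matrix.mulVecLin_apply]
    calc star v ⬝ᵥ (exp ((Complex.I * t) • H) * H ^ m * R *
            exp ((-(Complex.I * t)) • H)).mulVec v
        = star v ⬝ᵥ (exp ((Complex.I * t) • H)).mulVec ((H ^ m).mulVec
            (R.mulVec ((exp ((-(Complex.I * t)) • H)).mulVec v))) := by
          rw [Matrix.mulVec_mulVec, Matrix.mulVec_mulVec, Matrix.mulVec_mulVec]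
      _ = star ((∑ j, c j • ψ j)) ⬝ᵥ ((H ^ m).mulVec (R.mulVec (∑ k, c k • ψ k))) := by
          rw [dot_adjoint, hadj, hw]
      _ = star (∑ j, (c j * (lam j : ℂ) ^ m) • ψ j) ⬝ᵥ (∑ k, c k • R.mulVec (ψ k)) := by
          rw [dot_adjoint, hpowherm, hHmw, hRw]
      _ = ∑ j, ∑ k, (starRingEnd ℂ) (c j * (lam j : ℂ) ^ m) * c k * B j k := by
          rw [star_sum, sum_dotProduct']
          refine Finset.sum_congr rfl fun j _ => ?_
          rw [star_smul, smul_dotProduct, dotProduct_sum', Finset.smul_sum]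
          refine Finset.sum_congr rfl fun k _ => ?_
          rw [dotProduct_smul, hB]
          simp only [smul_eq_mul, Complex.star_def]
          ring
      _ = ∑ j, ∑ k, C j k * Complex.exp (Complex.I * ((lam j - lam k : ℝ) : ℂ) * t) := by
          refine Finset.sum_congr rfl fun j _ => Finset.sum_congr rfl fun k _ => ?_
          have h1 : (starRingEnd ℂ) (Complex.exp (-(Complex.I * t) * lam j))
              = Complex.exp (Complex.I * t * lam j) := by
            rw [← Complex.exp_conj]
            congr 1
            simp only [_root_.map_mul, map_neg, Complex.conj_I, Complex.conj_ofReal]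
            ring
          have h2 : Complex.exp (Complex.I * t * lam j) *
              Complex.exp (-(Complex.I * t) * lam k)
              = Complex.exp (Complex.I * ((lam j - lam k : ℝ) : ℂ) * t) := by
            rw [← Complex.exp_add]
            congr 1
            push_cast
            ring
          rw [show C j k * Complex.exp (Complex.I * ((lam j - lam k : ℝ) : ℂ) * t)
              = ((starRingEnd ℂ) (a j) * a k * ((lam j : ℂ)) ^ m * B j k) *
                (Complex.exp (Complex.I * t * lam j) *
                  Complex.exp (-(Complex.I * t) * lam k)) from by rw [h2, hC]]
          simp only [hc, _root_.map_mul, map_pow, Complex.conj_ofReal, h1]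
          ring
  -- Step B: rewrite the averaged integral
  have stepB : (fun T : ℝ => (1 / (T : ℂ)) *
      ∫ t in (0:ℝ)..T, star v ⬝ᵥ
        (exp ((Complex.I * t) • H) * H ^ m * R *
          exp ((-(Complex.I * t)) • H)).mulVec v)
      = fun T : ℝ => ∑ j, ∑ k, C j k *
          ((1 / (T : ℂ)) * ∫ t in (0:ℝ)..T,
            Complex.exp (Complex.I * ((lam j - lam k : ℝ) : ℂ) * t)) := by
    funext T
    have hcont : ∀ (j k : Fin n), IntervalIntegrable
        (fun t : ℝ => C j k * Complex.exp (Complex.I * ((lam j - lam k : ℝ) : ℂ) * t))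
        MeasureTheory.volume 0 T := by
      intro j k
      apply Continuous.intervalIntegrable
      exact continuous_const.mul (Complex.continuous_exp.comp (by continuity))
    have hcont2 : ∀ j : Fin n, IntervalIntegrable
        (fun t : ℝ => ∑ k, C j k * Complex.exp (Complex.I * ((lam j - lam k : ℝ) : ℂ) * t))
        MeasureTheory.volume 0 T := by
      intro j
      apply Continuous.intervalIntegrable
      exact continuous_finset_sum _ (fun k _ =>
        continuous_const.mul (Complex.continuous_exp.comp (by continuity)))
    rw [intervalIntegral.integral_congr (g := fun t : ℝ => ∑ j, ∑ k, C j k *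
        Complex.exp (Complex.I * ((lam j - lam k : ℝ) : ℂ) * t))
        (fun t _ => stepA t)]
    have h1 := intervalIntegral.integral_finset_sum (μ := MeasureTheory.volume)
        (a := (0:ℝ)) (b := T) (s := Finset.univ)
        (f := fun (j : Fin n) (t : ℝ) => ∑ k, C j k *
          Complex.exp (Complex.I * ((lam j - lam k : ℝ) : ℂ) * t))
        (fun j _ => hcont2 j)
    rw [h1]
    rw [Finset.mul_sum]
    refine Finset.sum_congr rfl fun j _ => ?_
    have h2 := intervalIntegral.integral_finset_sum (μ := MeasureTheory.volume)
        (a := (0:ℝ)) (b := T) (s := Finset.univ)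
        (f := fun (k : Fin n) (t : ℝ) => C j k *
          Complex.exp (Complex.I * ((lam j - lam k : ℝ) : ℂ) * t))
        (fun k _ => hcont j k)
    rw [h2, Finset.mul_sum]
    refine Finset.sum_congr rfl fun k _ => ?_
    rw [intervalIntegral.integral_const_mul]
    ring
  -- Step C: the limit
  have hdiag : ∀ j : Fin n, (∑ k, C j k * (if (lam j - lam k : ℝ) = 0 then 1 else 0)) = C j j := by
    intro j
    have hterm : ∀ k : Fin n, C j k * (if (lam j - lam k : ℝ) = 0 then 1 else 0)
        = if k = j then C j j else 0 := by
      intro k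
      by_cases hkj : k = j
      · subst hkj; simp
      · have hne : (lam j - lam k : ℝ) ≠ 0 := by
          rw [sub_ne_zero]
          exact fun h => hkj (hdist h.symm)
        simp [hne, hkj]
    rw [Finset.sum_congr rfl (fun k _ => hterm k), Finset.sum_ite_eq' Finset.univ j]
    simp
  have hlim : (∑ j, Complex.ofReal (‖a j‖ ^ 2) * Complex.ofReal (lam j) ^ m *
        (star (ψ j) ⬝ᵥ R.mulVec (ψ j)))
      = ∑ j, ∑ k, C j k * (if (lam j - lam k : ℝ) = 0 then 1 else 0) := by
    refine Finset.sum_congr rfl fun j _ => ?_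
    rw [hdiag j, hC]
    have hnr : (starRingEnd ℂ) (a j) * a j = Complex.ofReal (‖a j‖ ^ 2) := by
      rw [Complex.conj_mul']
      norm_cast
    simp only [hB]
    rw [← hnr]
  refine Tendsto.congr (fun T => (congrFun stepB T).symm) ?_
  rw [hlim]
  apply tendsto_finset_sum
  intro j _
  apply tendsto_finset_sum
  intro k _
  exact (tendsto_avg_exp (lam j - lam k)).const_mul (C j k)
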